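/- Assume additionally that i_1,…,i_m, a_1,…,a_m, b_1,…,b_m are positive integers, and let t ∈ P ∩ ℤ^m. Let A be the m×m integer matrix with diagonal entries A_{j,j} = −b_j, entries A_{j,j+1} = a_j just above the diagonal (indices taken modulo m, so A_{m,1} = a_m), and all other entries 0. Then there is a unique vector k ∈ ℤ^m minimizing k_1 + ⋯ + k_m subject to the constraints k ≥ 0, A·k ≥ −t, and A·k ≤ b − 1 − t (all inequalities coordinatewise, where 1 = (1,…,1)), and ψ(t) = t + A·k. -/

import Mathlib

open scoped BigOperators

/-- One step `s → s'` of the continuous O'Hara algorithm on `ℝ^m`: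
for some index `j` with `s_j ≥ b_j`, subtract `b_j` from the `j`-th
coordinate and add `a_{j-1}` to the `(j-1)`-st coordinate
(indices cyclically modulo `m`). -/
def CStep (m : ℕ) [NeZero m] (a b : Fin m → ℝ) (s s' : Fin m → ℝ) : Prop :=
  ∃ j : Fin m, b j ≤ s j ∧
    ∀ l, s' l = s l + (if l = j - 1 then a (j - 1) else 0)
                    - (if l = j then b j else 0)

/-- Membership in the half-open box `[0,a_1) × ⋯ × [0,a_m)`. -/
def InBox {m : ℕ} (a : Fin m → ℝ) (t : Fin m → ℝ) : Prop :=
  ∀ j, 0 ≤ t j ∧ t j < a j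

/-- The matrix `A` of O'Hara's algorithm: diagonal entries `-b_j`,
entries `a_j` just above the diagonal (cyclically, so `A_{m,1} = a_m`),
all other entries `0`.  (The two `if`s are added so that the definition is
also correct in the degenerate case `m = 1`, where `j = j + 1`.) -/
def oharaMatrix (m : ℕ) [NeZero m] (A B : Fin m → ℕ) :
    Matrix (Fin m) (Fin m) ℤ :=
  fun j l => (if l = j then -(B j : ℤ) else 0) + (if l = j + 1 then (A j : ℤ) else 0)

set_option linter.unusedSectionVars false
set_option linter.unusedVariables false

namespace OharaAux

variable {m : ℕ} [NeZero m]

def gv (I B : Fin m → ℕ) (j : Fin m) : ℤ :=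
  ∏ l ∈ Finset.univ.erase j, ((I l : ℤ) * (B l : ℤ))

def fidx (m : ℕ) [NeZero m] (r : ℕ) : Fin m :=
  ⟨m - 1 - r, by have := Nat.pos_of_ne_zero (NeZero.ne m); omega⟩

def chainK (A B : Fin m → ℕ) (T : Fin m → ℤ) (z : ℤ) : ℕ → ℤ
  | 0 => z
  | r + 1 => (T (fidx m (r+1)) + (A (fidx m (r+1)) : ℤ) * chainK A B T z r) / (B (fidx m (r+1)) : ℤ)

def kvec (A B : Fin m → ℕ) (T : Fin m → ℤ) (z : ℤ) (j : Fin m) : ℤ :=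
  chainK A B T z (m - 1 - j.val)

def xsv (A B : Fin m → ℕ) (T : Fin m → ℤ) (c : Fin m → ℤ) (j : Fin m) : ℤ :=
  T j + (A j : ℤ) * c (j + 1) - (B j : ℤ) * c j

lemma hm_pos : 1 ≤ m := Nat.pos_of_ne_zero (NeZero.ne m)

lemma fin_add_one_val {j : Fin m} (h : j.val + 1 < m) : ((j + 1 : Fin m)).val = j.val + 1 := by
  have h2 : 2 ≤ m := by omega
  rw [Fin.val_add, Fin.val_one', Nat.mod_eq_of_lt h2, Nat.mod_eq_of_lt h]

lemma fidx_succ {r : ℕ} (h : r + 1 ≤ m - 1) : fidx m (r + 1) + 1 = fidx m r := by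
  have hm1 : 1 ≤ m := hm_pos
  have hv : (fidx m (r+1)).val + 1 < m := by simp only [fidx]; omega
  apply Fin.ext
  rw [fin_add_one_val hv]
  simp only [fidx]; omega

variable {I A B : Fin m → ℕ} {T : Fin m → ℤ}

lemma chainK_periodic (hB : ∀ j, 0 < B j)
    (hkey : ∀ j, (A j : ℤ) * gv I B (j + 1) = (B j : ℤ) * gv I B j)
    (z : ℤ) :
    ∀ r, r ≤ m - 1 →
      chainK A B T (z + gv I B (fidx m 0)) r = chainK A B T z r + gv I B (fidx m r) := by
  intro r
  induction r with
  | zero => intro _; rfl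
  | succ r ih =>
      intro hr
      have ihr := ih (by omega)
      rw [chainK, chainK, ihr]
      have hstep : fidx m (r+1) + 1 = fidx m r := fidx_succ hr
      have hB' : ((B (fidx m (r+1)) : ℤ)) ≠ 0 := by
        have := hB (fidx m (r+1)); positivity
      have : T (fidx m (r+1)) + (A (fidx m (r+1)) : ℤ) *
            (chainK A B T z r + gv I B (fidx m r))
          = (T (fidx m (r+1)) + (A (fidx m (r+1)) : ℤ) * chainK A B T z r)
            + (B (fidx m (r+1)) : ℤ) * gv I B (fidx m (r+1)) := by
        rw [← hkey (fidx m (r+1)), hstep]; ring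
      rw [this, Int.add_mul_ediv_left _ _ hB']

lemma kvec_periodic (hB : ∀ j, 0 < B j)
    (hkey : ∀ j, (A j : ℤ) * gv I B (j + 1) = (B j : ℤ) * gv I B j)
    (z : ℤ) (j : Fin m) :
    kvec A B T (z + gv I B (fidx m 0)) j = kvec A B T z j + gv I B j := by
  have hm1 : 1 ≤ m := hm_pos
  have hj : j.val ≤ m - 1 := by omega
  have hfx : fidx m (m - 1 - j.val) = j := Fin.ext (by simp only [fidx]; omega)
  unfold kvec
  rw [chainK_periodic hB hkey z _ (by omega), hfx]

lemma xsv_shift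
    (hkey : ∀ j, (A j : ℤ) * gv I B (j + 1) = (B j : ℤ) * gv I B j)
    (c : Fin m → ℤ) (n : ℤ) (j : Fin m) :
    xsv A B T (fun l => c l + n * gv I B l) j = xsv A B T c j := by
  unfold xsv
  linear_combination n * hkey j

lemma kvec_last (z : ℤ) : kvec A B T z (fidx m 0) = z := by
  unfold kvec
  rw [show m - 1 - (fidx m 0).val = 0 by simp [fidx]]
  rfl

lemma kvec_rec (z : ℤ) {j : Fin m} (hj : j.val < m - 1) :
    kvec A B T z j = (T j + (A j : ℤ) * kvec A B T z (j + 1)) / (B j : ℤ) := by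
  have hm1 : 1 ≤ m := hm_pos
  obtain ⟨r, hr⟩ : ∃ r, m - 1 - j.val = r + 1 := ⟨m - 1 - j.val - 1, by omega⟩
  have hfj : fidx m (r + 1) = j := Fin.ext (by simp only [fidx]; omega)
  have hj1 : ((j + 1 : Fin m)).val = j.val + 1 := fin_add_one_val (by omega)
  have hr2 : m - 1 - ((j + 1 : Fin m)).val = r := by omega
  unfold kvec
  rw [hr, hr2, chainK, hfj]

lemma xsv_kvec_mid (hB : ∀ j, 0 < B j) (z : ℤ) {j : Fin m} (hj : j.val < m - 1) :
    0 ≤ xsv A B T (kvec A B T z) j ∧ xsv A B T (kvec A B T z) j ≤ (B j : ℤ) - 1 := by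
  have hB' : ((B j : ℤ)) ≠ 0 := by have := hB j; positivity
  have hBpos : (0:ℤ) < B j := by exact_mod_cast hB j
  have hx : xsv A B T (kvec A B T z) j
      = (T j + (A j : ℤ) * kvec A B T z (j + 1)) % (B j : ℤ) := by
    unfold xsv
    rw [kvec_rec z hj, Int.emod_def]
  rw [hx]
  exact ⟨Int.emod_nonneg _ hB', by have := Int.emod_lt_of_pos (T j + (A j : ℤ) * kvec A B T z (j + 1)) hBpos; omega⟩


lemma gv_pos (I B : Fin m → ℕ) (hI : ∀ j, 0 < I j) (hB : ∀ j, 0 < B j) (j : Fin m) :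
    1 ≤ gv I B j := by
  have h : 0 < gv I B j := by
    unfold gv
    apply Finset.prod_pos
    intro l _
    have h1 : (0:ℤ) < I l := by exact_mod_cast hI l
    have h2 : (0:ℤ) < B l := by exact_mod_cast hB l
    positivity
  omega

lemma gv_key (I A B : Fin m → ℕ) (hI : ∀ j, 0 < I j)
    (hiab : ∀ j : Fin m, I j * A j = I (j + 1) * B (j + 1)) (j : Fin m) :
    (A j : ℤ) * gv I B (j + 1) = (B j : ℤ) * gv I B j := by
  have key : (I j : ℤ) * A j = (I (j+1) : ℤ) * B (j+1) := by exact_mod_cast hiab j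
  by_cases hm : j + 1 = j
  · have hAB : (A j : ℤ) = B j := by
      rw [hm] at key
      have hIj : ((I j : ℤ)) ≠ 0 := by have := hI j; positivity
      exact mul_left_cancel₀ hIj key
    rw [hm, hAB]
  · unfold gv
    have hmem1 : j ∈ Finset.univ.erase (j+1) := by
      simp only [Finset.mem_erase, Finset.mem_univ, and_true]
      exact fun h => hm h.symm
    have hmem2 : j + 1 ∈ Finset.univ.erase j := by
      simp only [Finset.mem_erase, Finset.mem_univ, and_true]
      exact hm
    have h3 : (Finset.univ.erase (j+1)).erase j = (Finset.univ.erase j).erase (j+1) :=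
      Finset.ext fun x => by simp only [Finset.mem_erase, Finset.mem_univ, and_true]; tauto
    rw [← Finset.mul_prod_erase _ _ hmem1, ← Finset.mul_prod_erase _ _ hmem2, h3]
    linear_combination ((B j : ℤ) *
      ∏ l ∈ (Finset.univ.erase j).erase (j+1), ((I l : ℤ) * (B l : ℤ))) * key


variable {I A B : Fin m → ℕ} {T : Fin m → ℤ}

lemma chainK_mono (hA : ∀ j, 0 < A j) (hB : ∀ j, 0 < B j) {z z' : ℤ} (h : z ≤ z') (r : ℕ) :
    chainK A B T z r ≤ chainK A B T z' r := by
  induction r with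
  | zero => exact h
  | succ r ih =>
      rw [chainK, chainK]
      apply Int.ediv_le_ediv (by exact_mod_cast hB _)
      have hA' : (0:ℤ) ≤ A (fidx m (r+1)) := by positivity
      nlinarith

lemma chainK_nonneg (hA : ∀ j, 0 < A j) (hB : ∀ j, 0 < B j) (hT : ∀ j, 0 ≤ T j) (r : ℕ) :
    0 ≤ chainK A B T 0 r := by
  induction r with
  | zero => exact le_refl _
  | succ r ih =>
      rw [chainK]
      apply Int.ediv_nonneg _ (by positivity)
      have hA' : (0:ℤ) ≤ A (fidx m (r+1)) := by positivity
      nlinarith [hT (fidx m (r+1))]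

lemma chainK_neg (hA : ∀ j, 0 < A j) (hB : ∀ j, 0 < B j) (hT : ∀ j, T j < (A j : ℤ)) (r : ℕ) :
    chainK A B T (-1) r ≤ -1 := by
  induction r with
  | zero => exact le_refl _
  | succ r ih =>
      rw [chainK]
      have hB' : (0:ℤ) < B (fidx m (r+1)) := by exact_mod_cast hB _
      have hA' : (0:ℤ) ≤ A (fidx m (r+1)) := by positivity
      have hnum : T (fidx m (r+1)) + (A (fidx m (r+1)) : ℤ) * chainK A B T (-1) r ≤ -1 := by
        have h1 : (A (fidx m (r+1)) : ℤ) * chainK A B T (-1) r ≤ (A (fidx m (r+1)) : ℤ) * (-1) := by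
          exact mul_le_mul_of_nonneg_left ih hA'
        have := hT (fidx m (r+1))
        linarith
      calc (T (fidx m (r+1)) + (A (fidx m (r+1)) : ℤ) * chainK A B T (-1) r) / (B (fidx m (r+1)) : ℤ)
          ≤ (-1) / (B (fidx m (r+1)) : ℤ) := Int.ediv_le_ediv hB' hnum
        _ ≤ -1 := by
            have := Int.ediv_neg_of_neg_of_pos (a := (-1:ℤ)) (b := (B (fidx m (r+1)) : ℤ)) (by norm_num) hB'
            omega


theorem exists_feasible (hI : ∀ j, 0 < I j) (hA : ∀ j, 0 < A j) (hB : ∀ j, 0 < B j)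
    (hiab : ∀ j : Fin m, I j * A j = I (j + 1) * B (j + 1))
    (hT0 : ∀ j, 0 ≤ T j) (hTA : ∀ j, T j < (A j : ℤ)) :
    ∃ k : Fin m → ℤ, (∀ j, 0 ≤ k j) ∧ (∀ j, 0 ≤ xsv A B T k j) ∧
      (∀ j, xsv A B T k j ≤ (B j : ℤ) - 1) := by
  have hm1 : 1 ≤ m := hm_pos
  have hkey : ∀ j, (A j : ℤ) * gv I B (j + 1) = (B j : ℤ) * gv I B j :=
    fun j => gv_key I A B hI hiab j
  set j0 : Fin m := fidx m 0 with hj0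
  set β : ℤ := (B j0 : ℤ) with hβ
  set P : ℤ := gv I B j0 with hP
  have hPpos : 1 ≤ P := gv_pos I B hI hB j0
  have hβpos : 0 < β := by rw [hβ]; exact_mod_cast hB j0
  set G : ℤ → ℤ := fun z => xsv A B T (kvec A B T z) j0 with hG
  -- key facts about G
  have hGval : ∀ z, G z = T j0 + (A j0 : ℤ) * kvec A B T z (j0 + 1) - β * z := by
    intro z
    simp only [hG, xsv, hβ, hj0, kvec_last]
  have hGmono : ∀ z : ℤ, G z - β ≤ G (z + 1) := by
    intro z
    rw [hGval z, hGval (z+1)]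
    have hk : kvec A B T z (j0 + 1) ≤ kvec A B T (z+1) (j0 + 1) :=
      chainK_mono hA hB (by omega) _
    have hA0 : (0:ℤ) ≤ A j0 := by positivity
    nlinarith
  have hGper : ∀ z : ℤ, G (z + P) = G z := by
    intro z
    have h1 : kvec A B T (z + P) = fun l => kvec A B T z l + 1 * gv I B l := by
      funext l
      rw [kvec_periodic hB hkey z l]; ring
    simp only [hG, h1]
    exact xsv_shift hkey _ 1 j0
  have hG0 : 0 ≤ G 0 := by
    rw [hGval 0]
    have hk : 0 ≤ kvec A B T 0 (j0 + 1) := chainK_nonneg hA hB hT0 _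
    have hA0 : (0:ℤ) ≤ A j0 := by positivity
    nlinarith [hT0 j0]
  have hGm1 : G (-1) ≤ β - 1 := by
    rw [hGval (-1)]
    have hk : kvec A B T (-1) (j0 + 1) ≤ -1 := chainK_neg hA hB hTA _
    have hA0 : (0:ℤ) ≤ A j0 := by positivity
    nlinarith [hTA j0, mul_le_mul_of_nonneg_left hk hA0]
  -- find z* with G z* in the window [0, β-1]
  have hwin : ∃ z : ℤ, 0 ≤ G z ∧ G z ≤ β - 1 := by
    by_cases h0 : G 0 ≤ β - 1
    · exact ⟨0, hG0, h0⟩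
    · have hg0 : β ≤ G 0 := by omega
      have hQex : ∃ n : ℕ, G (n : ℤ) ≤ β - 1 := by
        refine ⟨(P - 1).toNat, ?_⟩
        have hc : (((P - 1).toNat : ℤ)) = P - 1 := Int.toNat_of_nonneg (by omega)
        rw [hc, show P - 1 = -1 + P by ring, hGper]
        exact hGm1
      classical
      set n₁ := Nat.find hQex with hn₁
      have hQn₁ : G ((n₁ : ℕ) : ℤ) ≤ β - 1 := Nat.find_spec hQex
      have hn₁pos : n₁ ≠ 0 := by
        intro h
        rw [h] at hQn₁
        simp at hQn₁
        omega
      have hprev : ¬ G (((n₁ - 1 : ℕ) : ℤ)) ≤ β - 1 := Nat.find_min hQex (by omega)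
      have hcast : (((n₁ - 1 : ℕ)) : ℤ) = (n₁ : ℤ) - 1 := by
        have : 1 ≤ n₁ := by omega
        push_cast [this]
        ring
      rw [hcast] at hprev
      have hstep := hGmono ((n₁ : ℤ) - 1)
      rw [show (n₁ : ℤ) - 1 + 1 = (n₁ : ℤ) by ring] at hstep
      exact ⟨(n₁ : ℤ), by omega, hQn₁⟩
  obtain ⟨z, hz0, hz1⟩ := hwin
  -- all constraints hold for kvec z
  have hall : ∀ j, 0 ≤ xsv A B T (kvec A B T z) j ∧ xsv A B T (kvec A B T z) j ≤ (B j : ℤ) - 1 := by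
    intro j
    by_cases hj : j.val < m - 1
    · exact xsv_kvec_mid hB z hj
    · have hjj : j = j0 := Fin.ext (by simp only [hj0, fidx]; omega)
      rw [hjj]
      exact ⟨hz0, hz1⟩
  -- shift to make the solution nonnegative
  set k0 : Fin m → ℤ := kvec A B T z with hk0
  set n : ℤ := ∑ l, |k0 l| with hn
  have hn0 : 0 ≤ n := Finset.sum_nonneg fun l _ => abs_nonneg _
  refine ⟨fun l => k0 l + n * gv I B l, ?_, ?_, ?_⟩
  · intro j
    show 0 ≤ k0 j + n * gv I B j
    have h1 : |k0 j| ≤ n := Finset.single_le_sum (fun l _ => abs_nonneg (k0 l)) (Finset.mem_univ j)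
    have h2 : n * 1 ≤ n * gv I B j := mul_le_mul_of_nonneg_left (gv_pos I B hI hB j) hn0
    have h3 : -k0 j ≤ |k0 j| := neg_le_abs _
    linarith
  · intro j
    rw [xsv_shift hkey k0 n j]
    exact (hall j).1
  · intro j
    rw [xsv_shift hkey k0 n j]
    exact (hall j).2

lemma xsv_update (c : Fin m → ℤ) (j0 j : Fin m) :
    xsv A B T (c + Pi.single j0 1) j
      = xsv A B T c j + (if j + 1 = j0 then (A j : ℤ) else 0)
        - (if j = j0 then (B j : ℤ) else 0) := by
  unfold xsv
  simp only [Pi.add_apply, Pi.single_apply]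
  split_ifs <;> ring

open Classical in
noncomputable def runC (A B : Fin m → ℕ) (T : Fin m → ℤ) : ℕ → Fin m → ℤ
  | 0 => 0
  | n + 1 =>
      if h : ∃ j, (B j : ℤ) ≤ xsv A B T (runC A B T n) j then
        runC A B T n + Pi.single h.choose 1
      else runC A B T n

lemma runC_succ_pos {n : ℕ} (h : ∃ j, (B j : ℤ) ≤ xsv A B T (runC A B T n) j) :
    runC A B T (n + 1) = runC A B T n + Pi.single h.choose 1 := by
  rw [runC, dif_pos h]

lemma runC_succ_neg {n : ℕ} (h : ¬ ∃ j, (B j : ℤ) ≤ xsv A B T (runC A B T n) j) :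
    runC A B T (n + 1) = runC A B T n := by
  rw [runC, dif_neg h]

lemma runC_nonneg (n : ℕ) (j : Fin m) : 0 ≤ runC A B T n j := by
  induction n with
  | zero => exact le_refl _
  | succ n ih =>
      by_cases h : ∃ j, (B j : ℤ) ≤ xsv A B T (runC A B T n) j
      · rw [runC_succ_pos h]
        simp only [Pi.add_apply, Pi.single_apply]
        split_ifs <;> linarith [ih]
      · rw [runC_succ_neg h]; exact ih

lemma runC_state_nonneg (hA : ∀ j, 0 < A j) (hT0 : ∀ j, 0 ≤ T j) (n : ℕ) (j : Fin m) :
    0 ≤ xsv A B T (runC A B T n) j := by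
  induction n generalizing j with
  | zero =>
      show 0 ≤ xsv A B T (runC A B T 0) j
      have : runC A B T 0 = 0 := rfl
      rw [this]
      simp only [xsv, Pi.zero_apply, mul_zero, sub_zero, add_zero]
      exact hT0 j
  | succ n ih =>
      by_cases h : ∃ j, (B j : ℤ) ≤ xsv A B T (runC A B T n) j
      · rw [runC_succ_pos h, xsv_update]
        have hch := h.choose_spec
        have hA' : (0:ℤ) ≤ A j := by positivity
        split_ifs with h1 h2 h2
        · have : j = h.choose := h2
          rw [← this] at hch
          linarith
        · linarith [ih j]
        · have : j = h.choose := h2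
          rw [← this] at hch
          linarith
        · linarith [ih j]
      · rw [runC_succ_neg h]; exact ih j

lemma runC_le_feas (hA : ∀ j, 0 < A j) (hB : ∀ j, 0 < B j)
    (k' : Fin m → ℤ) (hk'0 : ∀ j, 0 ≤ k' j)
    (hk'u : ∀ j, xsv A B T k' j ≤ (B j : ℤ) - 1) (n : ℕ) :
    ∀ j, runC A B T n j ≤ k' j := by
  induction n with
  | zero => exact hk'0
  | succ n ih =>
      by_cases h : ∃ j, (B j : ℤ) ≤ xsv A B T (runC A B T n) j
      · intro j
        rw [runC_succ_pos h]
        simp only [Pi.add_apply, Pi.single_apply]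
        by_cases hj : j = h.choose
        · rw [if_pos hj]
          have hch := h.choose_spec
          rw [← hj] at hch
          by_contra hcon
          push_neg at hcon
          have heq : runC A B T n j = k' j := le_antisymm (ih j) (by omega)
          have hle : runC A B T n (j + 1) ≤ k' (j + 1) := ih (j + 1)
          have hmul : (A j : ℤ) * runC A B T n (j + 1) ≤ (A j : ℤ) * k' (j + 1) :=
            mul_le_mul_of_nonneg_left hle (by positivity)
          have h1 : (B j : ℤ) ≤ xsv A B T (runC A B T n) j := hch
          have h2 : xsv A B T k' j ≤ (B j : ℤ) - 1 := hk'u j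
          unfold xsv at h1 h2
          rw [heq] at h1
          linarith
        · simp only [if_neg hj, add_zero]
          exact ih j
      · rw [runC_succ_neg h]; exact ih

lemma runC_sum_succ {n : ℕ} (h : ∃ j, (B j : ℤ) ≤ xsv A B T (runC A B T n) j) :
    ∑ j, runC A B T (n + 1) j = (∑ j, runC A B T n j) + 1 := by
  rw [runC_succ_pos h]
  simp only [Pi.add_apply]
  rw [Finset.sum_add_distrib]
  congr 1
  simp

lemma exists_normal (hI : ∀ j, 0 < I j) (hA : ∀ j, 0 < A j) (hB : ∀ j, 0 < B j)
    (hiab : ∀ j : Fin m, I j * A j = I (j + 1) * B (j + 1))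
    (hT0 : ∀ j, 0 ≤ T j) (hTA : ∀ j, T j < (A j : ℤ)) :
    ∃ n, ¬ ∃ j, (B j : ℤ) ≤ xsv A B T (runC A B T n) j := by
  obtain ⟨k', hk'0, _, hk'u⟩ := exists_feasible hI hA hB hiab hT0 hTA
  by_contra hcon
  push_neg at hcon
  have hsum : ∀ n : ℕ, (n : ℤ) ≤ ∑ j, runC A B T n j := by
    intro n
    induction n with
    | zero =>
        have h0 : runC A B T 0 = 0 := rfl
        rw [h0]
        simp
    | succ n ih =>
        rw [runC_sum_succ (hcon n)]
        push_cast
        linarith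
  have hub : ∀ n : ℕ, (∑ j, runC A B T n j) ≤ ∑ j, k' j := by
    intro n
    exact Finset.sum_le_sum fun j _ => runC_le_feas hA hB k' hk'0 hk'u n j
  have hk'nonneg : 0 ≤ ∑ j, k' j := Finset.sum_nonneg fun j _ => hk'0 j
  have := hsum ((∑ j, k' j).toNat + 1)
  have := hub ((∑ j, k' j).toNat + 1)
  have hcast : (((∑ j, k' j).toNat + 1 : ℕ) : ℤ) = (∑ j, k' j) + 1 := by
    push_cast
    rw [Int.toNat_of_nonneg hk'nonneg]
  omega

lemma mulVec_ohara (A B : Fin m → ℕ) (c : Fin m → ℤ) (j : Fin m) :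
    (oharaMatrix m A B).mulVec c j = (A j : ℤ) * c (j + 1) - (B j : ℤ) * c j := by
  have h1 : ∀ l, ((if l = j then -(B j : ℤ) else 0) + (if l = j + 1 then (A j : ℤ) else 0)) * c l
      = (if l = j then -(B j : ℤ) * c l else 0) + (if l = j + 1 then (A j : ℤ) * c l else 0) := by
    intro l; split_ifs <;> ring
  unfold Matrix.mulVec dotProduct oharaMatrix
  simp only [h1, Finset.sum_add_distrib, Finset.sum_ite_eq', Finset.mem_univ, if_true]
  ring

lemma xsv_eq_mulVec (A B : Fin m → ℕ) (T : Fin m → ℤ) (c : Fin m → ℤ) (j : Fin m) :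
    xsv A B T c j = T j + (oharaMatrix m A B).mulVec c j := by
  rw [mulVec_ohara]; unfold xsv; ring


end OharaAux


/-- O'Hara's map as an integer linear program.  For integer
data and an integer point `t ∈ P`, there is a unique `k ∈ ℤ^m` minimizing
`k_1 + ⋯ + k_m` subject to `k ≥ 0`, `A·k ≥ -t` and `A·k ≤ b - 1 - t`, and
`ψ(t) = t + A·k`.  Here `ψ t` is the common end of all maximal rewrite
sequences from `t`. -/
theorem ohara_integer_program {m : ℕ} [NeZero m] (I A B : Fin m → ℕ)
    (hI : ∀ j, 0 < I j) (hA : ∀ j, 0 < A j) (hB : ∀ j, 0 < B j)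
    (hiab : ∀ j : Fin m, I j * A j = I (j + 1) * B (j + 1))
    (psi : (Fin m → ℝ) → (Fin m → ℝ))
    (hpsi : ∀ t, InBox (fun j => (A j : ℝ)) t →
      ∀ (s : ℕ → Fin m → ℝ) (k : ℕ), s 0 = t →
      (∀ l < k, CStep m (fun j => (A j : ℝ)) (fun j => (B j : ℝ))
        (s l) (s (l + 1))) →
      (∀ j, s k j < (B j : ℝ)) → psi t = s k)
    (T : Fin m → ℤ) (hT : ∀ j, 0 ≤ T j ∧ T j < (A j : ℤ)) :
    ∃ k : Fin m → ℤ,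
      ((∀ j, 0 ≤ k j) ∧
       (∀ j, -(T j) ≤ (oharaMatrix m A B).mulVec k j) ∧
       (∀ j, (oharaMatrix m A B).mulVec k j ≤ (B j : ℤ) - 1 - T j) ∧
       (∀ k' : Fin m → ℤ,
         (∀ j, 0 ≤ k' j) →
         (∀ j, -(T j) ≤ (oharaMatrix m A B).mulVec k' j) →
         (∀ j, (oharaMatrix m A B).mulVec k' j ≤ (B j : ℤ) - 1 - T j) →
         (∑ j, k j) ≤ ∑ j, k' j)) ∧
      (∀ k' : Fin m → ℤ,
         ((∀ j, 0 ≤ k' j) ∧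
          (∀ j, -(T j) ≤ (oharaMatrix m A B).mulVec k' j) ∧
          (∀ j, (oharaMatrix m A B).mulVec k' j ≤ (B j : ℤ) - 1 - T j) ∧
          (∀ k'' : Fin m → ℤ,
            (∀ j, 0 ≤ k'' j) →
            (∀ j, -(T j) ≤ (oharaMatrix m A B).mulVec k'' j) →
            (∀ j, (oharaMatrix m A B).mulVec k'' j ≤ (B j : ℤ) - 1 - T j) →
            (∑ j, k' j) ≤ ∑ j, k'' j)) → k' = k) ∧
      (∀ j, psi (fun l => (T l : ℝ)) j =
        (T j : ℝ) + (((oharaMatrix m A B).mulVec k j : ℤ) : ℝ)) := by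
  classical
  have hT0 : ∀ j, 0 ≤ T j := fun j => (hT j).1
  have hTA : ∀ j, T j < (A j : ℤ) := fun j => (hT j).2
  have hbridge : ∀ (c : Fin m → ℤ) (j : Fin m),
      (oharaMatrix m A B).mulVec c j = OharaAux.xsv A B T c j - T j := by
    intro c j
    have := OharaAux.xsv_eq_mulVec A B T c j
    linarith
  have hterm := OharaAux.exists_normal hI hA hB hiab hT0 hTA
  obtain ⟨n₀, hn₀, hleast⟩ :
      ∃ n, (¬∃ j, (B j : ℤ) ≤ OharaAux.xsv A B T (OharaAux.runC A B T n) j) ∧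
        ∀ l < n, ∃ j, (B j : ℤ) ≤ OharaAux.xsv A B T (OharaAux.runC A B T l) j := by
    refine ⟨Nat.find hterm, Nat.find_spec hterm, ?_⟩
    intro l hl
    have h := Nat.find_min hterm hl
    exact not_not.mp h
  push_neg at hn₀
  set k := OharaAux.runC A B T n₀ with hkdef
  have hk0 : ∀ j, 0 ≤ k j := fun j => OharaAux.runC_nonneg n₀ j
  have hkl : ∀ j, 0 ≤ OharaAux.xsv A B T k j :=
    fun j => OharaAux.runC_state_nonneg hA hT0 n₀ j
  have hku : ∀ j, OharaAux.xsv A B T k j ≤ (B j : ℤ) - 1 := fun j =>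
    Int.le_sub_one_iff.mpr (hn₀ j)
  clear hkdef
  -- mulVec-form constraints for k
  have hkml : ∀ j, -(T j) ≤ (oharaMatrix m A B).mulVec k j := fun j => by
    rw [hbridge]; linarith [hkl j]
  have hkmu : ∀ j, (oharaMatrix m A B).mulVec k j ≤ (B j : ℤ) - 1 - T j := fun j => by
    rw [hbridge]; linarith [hku j]
  -- pointwise minimality
  have hptwise : ∀ k' : Fin m → ℤ, (∀ j, 0 ≤ k' j) →
      (∀ j, (oharaMatrix m A B).mulVec k' j ≤ (B j : ℤ) - 1 - T j) →
      ∀ j, k j ≤ k' j := by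
    intro k' h0 hu
    have hu' : ∀ j, OharaAux.xsv A B T k' j ≤ (B j : ℤ) - 1 := fun j => by
      have := hu j; rw [hbridge] at this; linarith
    exact OharaAux.runC_le_feas hA hB k' h0 hu' n₀
  have hmin : ∀ k' : Fin m → ℤ, (∀ j, 0 ≤ k' j) →
      (∀ j, -(T j) ≤ (oharaMatrix m A B).mulVec k' j) →
      (∀ j, (oharaMatrix m A B).mulVec k' j ≤ (B j : ℤ) - 1 - T j) →
      (∑ j, k j) ≤ ∑ j, k' j := by
    intro k' h0 _ hu
    exact Finset.sum_le_sum fun j _ => hptwise k' h0 hu j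
  refine ⟨k, ⟨hk0, hkml, hkmu, hmin⟩, ?_, ?_⟩
  · -- uniqueness of the minimizer
    rintro k' ⟨h0, hl, hu, hmink'⟩
    have hle : ∀ j, k j ≤ k' j := hptwise k' h0 hu
    have hsum1 : (∑ j, k' j) ≤ ∑ j, k j := hmink' k hk0 hkml hkmu
    funext j
    by_contra hne
    have hlt : k j < k' j := lt_of_le_of_ne (hle j) fun h => hne h.symm
    have := Finset.sum_lt_sum (fun i _ => hle i) ⟨j, Finset.mem_univ j, hlt⟩
    omega
  · -- the value of psi
    set s : ℕ → Fin m → ℝ :=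
      fun n j => ((OharaAux.xsv A B T (OharaAux.runC A B T n) j : ℤ) : ℝ) with hsdef
    have hbox : InBox (fun j => (A j : ℝ)) (fun l => (T l : ℝ)) := by
      intro j
      refine ⟨?_, ?_⟩
      · show (0:ℝ) ≤ (T j : ℝ)
        exact_mod_cast hT0 j
      · show (T j : ℝ) < ((A j : ℕ) : ℝ)
        exact_mod_cast hTA j
    have hs0 : s 0 = fun l => (T l : ℝ) := by
      funext j
      have h0 : OharaAux.runC A B T 0 = 0 := rfl
      simp only [hsdef, h0, OharaAux.xsv, Pi.zero_apply, mul_zero, sub_zero, add_zero]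
    have hsteps : ∀ l < n₀, CStep m (fun j => (A j : ℝ)) (fun j => (B j : ℝ))
        (s l) (s (l + 1)) := by
      intro l hl
      have hstep : ∃ j, (B j : ℤ) ≤ OharaAux.xsv A B T (OharaAux.runC A B T l) j :=
        hleast l hl
      refine ⟨hstep.choose, ?_, ?_⟩
      · have := hstep.choose_spec
        simp only [hsdef]
        exact_mod_cast this
      · intro l'
        have hrw : OharaAux.runC A B T (l + 1)
            = OharaAux.runC A B T l + Pi.single hstep.choose 1 :=
          OharaAux.runC_succ_pos hstep
        show ((OharaAux.xsv A B T (OharaAux.runC A B T (l+1)) l' : ℤ) : ℝ) = _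
        rw [hrw, OharaAux.xsv_update]
        set j0 := hstep.choose with hj0def
        have hiff : (l' = j0 - 1) ↔ (l' + 1 = j0) := eq_sub_iff_add_eq
        simp only [hsdef]
        push_cast
        by_cases h1 : l' + 1 = j0
        · have h1' : l' = j0 - 1 := hiff.mpr h1
          have hAeq : ((A (j0 - 1) : ℕ) : ℝ) = ((A l' : ℕ) : ℝ) := by rw [h1']
          rw [if_pos h1, if_pos h1', hAeq]
          by_cases h2 : l' = j0
          · have hBeq : ((B j0 : ℕ) : ℝ) = ((B l' : ℕ) : ℝ) := by rw [h2]
            rw [if_pos h2, if_pos h2, hBeq]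
            try ring
          · rw [if_neg h2, if_neg h2]
            try ring
        · have h1' : ¬ l' = j0 - 1 := fun hh => h1 (hiff.mp hh)
          rw [if_neg h1, if_neg h1']
          by_cases h2 : l' = j0
          · have hBeq : ((B j0 : ℕ) : ℝ) = ((B l' : ℕ) : ℝ) := by rw [h2]
            rw [if_pos h2, if_pos h2, hBeq]
            try ring
          · rw [if_neg h2, if_neg h2]
            try ring
    have hfin : ∀ j, s n₀ j < (B j : ℝ) := by
      intro j
      have := hku j
      simp only [hsdef]
      exact_mod_cast (by omega : OharaAux.xsv A B T k j < (B j : ℤ))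
    have hps := hpsi (fun l => (T l : ℝ)) hbox s n₀ hs0 hsteps hfin
    intro j
    rw [hps]
    simp only [hsdef]
    rw [hbridge k j]
    push_cast
    ring
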